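/- Let S be a countable index set and for each r ∈ S let (u^r_k)_{k≥1} be an i.i.d. sequence of strictly positive random variables. Assume inf_{r∈S} E[u^r_1] > 0 and that the family {(u^r_1)²}_{r∈S} is uniformly integrable. Let N^r(t) = max{m ∈ ℕ₀ : ∑_{k=1}^m u^r_k ≤ t} be the associated counting processes. Then for every t ≥ 0 and every p ∈ ℕ, sup_{r∈S} E[(N^r(t))^p] < ∞. -/

import Mathlib

open MeasureTheory ProbabilityTheory Set
open scoped ENNReal

noncomputable section

namespace Stmt13

variable {Ω : Type*} [MeasurableSpace Ω]

/-- Partial sums `ξ(m) = ∑_{k=1}^m u_k` (0-indexed sequence). -/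
def psum (u : ℕ → Ω → ℝ) (m : ℕ) (ω : Ω) : ℝ := ∑ k ∈ Finset.range m, u k ω

/-- Counting (renewal) process `N(t) = max {m ∈ ℕ₀ : ξ(m) ≤ t}`. -/
def count (u : ℕ → Ω → ℝ) (t : ℝ) (ω : Ω) : ℕ := sSup {m : ℕ | psum u m ω ≤ t}

lemma exp_neg_le_quad {x : ℝ} (hx : 0 ≤ x) : Real.exp (-x) ≤ 1 - x + x^2/2 := by
  have hq : 0 < 1 - x + x^2/2 := by nlinarith [sq_nonneg (x-1)]
  have h4 : 1 + x + x^2/2 + x^3/6 ≤ Real.exp x := by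
    have h := Real.sum_le_exp_of_nonneg hx 4
    have heq : ∑ i ∈ Finset.range 4, x ^ i / i.factorial = 1 + x + x^2/2 + x^3/6 := by
      norm_num [Finset.sum_range_succ, Nat.factorial]
    linarith [heq ▸ h]
  have h1 : 1 ≤ (1 - x + x^2/2) * Real.exp x := by
    have h5 := mul_le_mul_of_nonneg_left h4 hq.le
    nlinarith [pow_nonneg hx 3, pow_nonneg hx 4, pow_nonneg hx 5]
  rw [Real.exp_neg, inv_eq_one_div, div_le_iff₀ (Real.exp_pos x)]
  linarith

/-- The renewal count always satisfies `ξ(N(t)) ≤ t` when `t ≥ 0`. -/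
lemma psum_count_le {u : ℕ → Ω → ℝ} {t : ℝ} (ht : 0 ≤ t) (ω : Ω) :
    psum u (count u t ω) ω ≤ t := by
  classical
  set s : Set ℕ := {m : ℕ | psum u m ω ≤ t} with hs
  have h0 : (0 : ℕ) ∈ s := by simp [hs, psum, ht]
  by_cases hb : BddAbove s
  · exact Nat.sSup_mem ⟨0, h0⟩ hb
  · have : count u t ω = 0 := by
      rw [count, csSup_of_not_bddAbove hb, csSup_empty]
      rfl
    rw [this]
    simpa [psum] using ht

theorem stmt13 (P : Measure Ω) [IsProbabilityMeasure P]
    {S : Type*} [Countable S]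
    (u : S → ℕ → Ω → ℝ)
    (hmeas : ∀ r k, Measurable (u r k))
    (hpos : ∀ r k, ∀ᵐ ω ∂P, 0 < u r k ω)
    (hindep : ∀ r, iIndepFun (u r) P)
    (hident : ∀ r k, IdentDistrib (u r k) (u r 0) P P)
    (a : ℝ) (ha : 0 < a)
    (hmean : ∀ r, a ≤ ∫ ω, u r 0 ω ∂P)
    (hint : ∀ r, Integrable (fun ω => (u r 0 ω) ^ 2) P)
    (hUI : ∀ ε : ℝ, 0 < ε → ∃ K : ℝ,
      ∀ r, ∫ ω in {ω | K < (u r 0 ω) ^ 2}, (u r 0 ω) ^ 2 ∂P ≤ ε) :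
    ∀ t : ℝ, 0 ≤ t → ∀ p : ℕ,
      ∃ C : ℝ≥0∞, C < ⊤ ∧ ∀ r,
        ∫⁻ ω, ((count (u r) t ω : ℝ≥0∞)) ^ p ∂P ≤ C := by
  intro t ht p
  -- uniform second moment bound
  obtain ⟨K₀, hK₀⟩ := hUI 1 one_pos
  set M : ℝ := max K₀ 0 + 1 with hMdef
  have hMpos : 0 < M := by positivity
  have hM2 : ∀ r, ∫ ω, (u r 0 ω) ^ 2 ∂P ≤ M := by
    intro r
    have hAmeas : MeasurableSet {ω | K₀ < (u r 0 ω) ^ 2} :=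
      measurableSet_lt measurable_const ((hmeas r 0).pow_const 2)
    have hsplit := integral_add_compl hAmeas (hint r)
    have h2 : ∫ ω in {ω | K₀ < (u r 0 ω) ^ 2}ᶜ, (u r 0 ω) ^ 2 ∂P ≤ max K₀ 0 := by
      have hmono : ∫ ω in {ω | K₀ < (u r 0 ω) ^ 2}ᶜ, (u r 0 ω) ^ 2 ∂P ≤
          ∫ _ω in {ω | K₀ < (u r 0 ω) ^ 2}ᶜ, max K₀ 0 ∂P := by
        refine setIntegral_mono_on (hint r).integrableOn (integrableOn_const ?_)
          hAmeas.compl ?_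
        · exact measure_ne_top _ _
        · intro ω hω
          simp only [mem_compl_iff, mem_setOf_eq, not_lt] at hω
          exact le_trans hω (le_max_left _ _)
      have hconst : ∫ _ω in {ω | K₀ < (u r 0 ω) ^ 2}ᶜ, max K₀ 0 ∂P =
          max K₀ 0 * (P {ω | K₀ < (u r 0 ω) ^ 2}ᶜ).toReal := by
        rw [setIntegral_const, smul_eq_mul, mul_comm]; rfl
      have hle1 : (P {ω | K₀ < (u r 0 ω) ^ 2}ᶜ).toReal ≤ 1 := by
        have h := prob_le_one (μ := P) (s := {ω | K₀ < (u r 0 ω) ^ 2}ᶜ)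
        simpa using ENNReal.toReal_mono ENNReal.one_ne_top h
      calc ∫ ω in {ω | K₀ < (u r 0 ω) ^ 2}ᶜ, (u r 0 ω) ^ 2 ∂P
          ≤ max K₀ 0 * (P {ω | K₀ < (u r 0 ω) ^ 2}ᶜ).toReal := by rw [← hconst]; exact hmono
        _ ≤ max K₀ 0 * 1 := by
            exact mul_le_mul_of_nonneg_left hle1 (le_max_right _ _)
        _ = max K₀ 0 := mul_one _
    have h1 := hK₀ r
    rw [hMdef]
    linarith [hsplit]
  -- integrability of u
  have hintu : ∀ r, Integrable (fun ω => u r 0 ω) P := by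
    intro r
    refine (((integrable_const (1 : ℝ)).add (hint r)).div_const 2).mono'
      (hmeas r 0).aestronglyMeasurable ?_
    filter_upwards with ω
    simp only [Real.norm_eq_abs, Pi.add_apply]
    nlinarith [sq_nonneg (|u r 0 ω| - 1), sq_abs (u r 0 ω), abs_nonneg (u r 0 ω)]
  set s : ℝ := a / M with hsdef
  have hspos : 0 < s := div_pos ha hMpos
  set q : ℝ := max (1 - a ^ 2 / (2 * M)) 0 with hqdef
  have hq1 : q < 1 := by
    rw [hqdef]
    apply max_lt _ one_pos
    have : 0 < a ^ 2 / (2 * M) := by positivity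
    linarith
  have hq0 : 0 ≤ q := le_max_right _ _
  -- integrability of exp(-s * u r k)
  have hexpint : ∀ r k, Integrable (fun ω => Real.exp (-s * u r k ω)) P := by
    intro r k
    refine (integrable_const (1 : ℝ)).mono'
      (((hmeas r k).const_mul (-s)).exp.aestronglyMeasurable) ?_
    filter_upwards [hpos r k] with ω hω
    rw [Real.norm_eq_abs, abs_of_pos (Real.exp_pos _)]
    exact Real.exp_le_one_iff.2 (by nlinarith)
  -- mgf bound
  have hmgf : ∀ r, mgf (u r 0) P (-s) ≤ q := by
    intro r
    have hle : ∀ᵐ ω ∂P, Real.exp (-s * u r 0 ω) ≤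
        1 - s * u r 0 ω + s ^ 2 / 2 * (u r 0 ω) ^ 2 := by
      filter_upwards [hpos r 0] with ω hω
      have h := exp_neg_le_quad (mul_nonneg hspos.le hω.le)
      have h2 : (s * u r 0 ω) ^ 2 / 2 = s ^ 2 / 2 * (u r 0 ω) ^ 2 := by ring
      rw [neg_mul]
      linarith
    have hfsub : Integrable (fun ω => 1 - s * u r 0 ω) P := by
      exact (integrable_const 1).sub ((hintu r).const_mul s)
    have hfsq : Integrable (fun ω => s ^ 2 / 2 * (u r 0 ω) ^ 2) P := (hint r).const_mul (s ^ 2 / 2)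
    have hfmul : Integrable (fun ω => s * u r 0 ω) P := (hintu r).const_mul s
    have hint2 : Integrable (fun ω => 1 - s * u r 0 ω + s ^ 2 / 2 * (u r 0 ω) ^ 2) P :=
      hfsub.add hfsq
    have hbound : mgf (u r 0) P (-s) ≤ 1 - s * ∫ ω, u r 0 ω ∂P + s ^ 2 / 2 * ∫ ω, (u r 0 ω) ^ 2 ∂P := by
      have h1 : mgf (u r 0) P (-s) ≤ ∫ ω, (1 - s * u r 0 ω + s ^ 2 / 2 * (u r 0 ω) ^ 2) ∂P :=
        integral_mono_ae (hexpint r 0) hint2 hle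
      have h2 : ∫ ω, (1 - s * u r 0 ω + s ^ 2 / 2 * (u r 0 ω) ^ 2) ∂P =
          1 - s * ∫ ω, u r 0 ω ∂P + s ^ 2 / 2 * ∫ ω, (u r 0 ω) ^ 2 ∂P := by
        rw [integral_add hfsub hfsq, integral_sub (integrable_const 1) hfmul,
          integral_const, integral_const_mul, integral_const_mul]
        simp
      linarith
    have h3 : 1 - s * ∫ ω, u r 0 ω ∂P + s ^ 2 / 2 * ∫ ω, (u r 0 ω) ^ 2 ∂P ≤
        1 - a ^ 2 / (2 * M) := by
      have hm := hmean r
      have hm2 := hM2 r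
      have h5 : s * a ≤ s * ∫ ω, u r 0 ω ∂P := mul_le_mul_of_nonneg_left hm hspos.le
      have h4 : s ^ 2 / 2 * ∫ ω, (u r 0 ω) ^ 2 ∂P ≤ s ^ 2 / 2 * M :=
        mul_le_mul_of_nonneg_left hm2 (by positivity)
      have hM' : M ≠ 0 := hMpos.ne'
      have e1 : s * a = a ^ 2 / M := by rw [hsdef]; field_simp
      have e2 : s ^ 2 / 2 * M = a ^ 2 / (2 * M) := by rw [hsdef]; field_simp
      have e3 : a ^ 2 / M = a ^ 2 / (2 * M) + a ^ 2 / (2 * M) := by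
        rw [← add_div, ← two_mul]
        rw [eq_div_iff (by positivity : (2 : ℝ) * M ≠ 0)]
        field_simp
      linarith
    exact le_trans hbound (le_trans h3 (le_max_left _ _))
  -- the tail bound per n and r
  set Q : ℝ≥0∞ := ENNReal.ofReal q with hQdef
  set E : ℝ≥0∞ := ENNReal.ofReal (Real.exp (s * t)) with hEdef
  have htail : ∀ r n, P {ω | psum (u r) n ω ≤ t} ≤ E * Q ^ n := by
    intro r n
    set X : Ω → ℝ := ∑ k ∈ Finset.range n, u r k with hXdef
    have hXeq : ∀ ω, psum (u r) n ω = X ω := by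
      intro ω; rw [hXdef]; simp [psum]
    have hintX : Integrable (fun ω => Real.exp (-s * X ω)) P := by
      exact (hindep r).integrable_exp_mul_sum (hmeas r) (fun k _ => hexpint r k)
    have hcher := measure_le_le_exp_mul_mgf (X := X) (μ := P) t (neg_nonpos.2 hspos.le) hintX
    have hprod : mgf X P (-s) = (mgf (u r 0) P (-s)) ^ n := by
      rw [hXdef, (hindep r).mgf_sum (hmeas r) (Finset.range n)]
      have : ∀ k ∈ Finset.range n, mgf (u r k) P (-s) = mgf (u r 0) P (-s) := by
        intro k _
        exact ((hident r k).comp (measurable_const_mul (-s)).exp).integral_eq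
      rw [Finset.prod_congr rfl this, Finset.prod_const, Finset.card_range]
    have hb : (P {ω | X ω ≤ t}).toReal ≤ Real.exp (s * t) * q ^ n := by
      have h2 : mgf X P (-s) ≤ q ^ n := by
        rw [hprod]
        exact pow_le_pow_left₀ (mgf_nonneg) (hmgf r) n
      calc (P {ω | X ω ≤ t}).toReal ≤ Real.exp (-(-s) * t) * mgf X P (-s) := hcher
        _ = Real.exp (s * t) * mgf X P (-s) := by ring_nf
        _ ≤ Real.exp (s * t) * q ^ n :=
            mul_le_mul_of_nonneg_left h2 (Real.exp_pos _).le
    have hset : {ω | psum (u r) n ω ≤ t} = {ω | X ω ≤ t} := by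
      ext ω; simp [hXeq ω]
    rw [hset]
    calc P {ω | X ω ≤ t} = ENNReal.ofReal (P {ω | X ω ≤ t}).toReal :=
          (ENNReal.ofReal_toReal (measure_ne_top _ _)).symm
      _ ≤ ENNReal.ofReal (Real.exp (s * t) * q ^ n) := ENNReal.ofReal_le_ofReal hb
      _ = E * Q ^ n := by
          rw [ENNReal.ofReal_mul (Real.exp_pos _).le, ENNReal.ofReal_pow hq0]
  -- convergence of the series
  set C : ℝ≥0∞ := ∑' n : ℕ, (n : ℝ≥0∞) ^ p * (E * Q ^ n) with hCdef
  have hCfin : C < ⊤ := by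
    have hC' : C = E * ∑' n : ℕ, (n : ℝ≥0∞) ^ p * Q ^ n := by
      rw [hCdef, ← ENNReal.tsum_mul_left]
      congr 1; ext n; ring
    rw [hC']
    have hEfin : E ≠ ⊤ := ENNReal.ofReal_ne_top
    have hsum : ∑' n : ℕ, (n : ℝ≥0∞) ^ p * Q ^ n ≠ ⊤ := by
      set ρ : NNReal := q.toNNReal with hρdef
      have hQρ : Q = (ρ : ℝ≥0∞) := rfl
      have hterm : ∀ n : ℕ, (n : ℝ≥0∞) ^ p * Q ^ n = (((n : NNReal) ^ p * ρ ^ n : NNReal) : ℝ≥0∞) := by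
        intro n
        rw [hQρ]
        push_cast
        ring
      rw [tsum_congr hterm]
      rw [ENNReal.tsum_coe_ne_top_iff_summable]
      rw [← NNReal.summable_coe]
      have : ∀ n : ℕ, (((n : NNReal) ^ p * ρ ^ n : NNReal) : ℝ) = (n : ℝ) ^ p * (ρ : ℝ) ^ n := by
        intro n; push_cast; ring
      rw [funext this]
      apply summable_pow_mul_geometric_of_norm_lt_one
      rw [Real.norm_eq_abs, abs_of_nonneg ρ.coe_nonneg]
      have : (ρ : ℝ) = q := Real.coe_toNNReal q hq0
      rw [this]; exact hq1
    exact ENNReal.mul_lt_top hEfin.lt_top (lt_top_iff_ne_top.2 hsum)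
  refine ⟨C, hCfin, fun r => ?_⟩
  -- pointwise bound of N^p by a series of indicators
  have hkey : ∀ ω, ((count (u r) t ω : ℝ≥0∞)) ^ p ≤
      ∑' n : ℕ, (n : ℝ≥0∞) ^ p *
        Set.indicator {ω' | psum (u r) n ω' ≤ t} (1 : Ω → ℝ≥0∞) ω := by
    intro ω
    have h0 : ω ∈ {ω' | psum (u r) (count (u r) t ω) ω' ≤ t} := psum_count_le ht ω
    have h1 : ((count (u r) t ω : ℝ≥0∞)) ^ p = (count (u r) t ω : ℝ≥0∞) ^ p *
        Set.indicator {ω' | psum (u r) (count (u r) t ω) ω' ≤ t} (1 : Ω → ℝ≥0∞) ω := by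
      simp [Set.indicator_of_mem h0]
    rw [h1]
    exact ENNReal.le_tsum (count (u r) t ω)
  have hAmeas : ∀ n : ℕ, MeasurableSet {ω | psum (u r) n ω ≤ t} := by
    intro n
    apply measurableSet_le _ measurable_const
    exact Finset.measurable_sum _ (fun k _ => hmeas r k)
  calc ∫⁻ ω, ((count (u r) t ω : ℝ≥0∞)) ^ p ∂P
      ≤ ∫⁻ ω, ∑' n : ℕ, (n : ℝ≥0∞) ^ p *
          Set.indicator {ω' | psum (u r) n ω' ≤ t} (1 : Ω → ℝ≥0∞) ω ∂P :=
        lintegral_mono hkey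
    _ = ∑' n : ℕ, ∫⁻ ω, (n : ℝ≥0∞) ^ p *
          Set.indicator {ω' | psum (u r) n ω' ≤ t} (1 : Ω → ℝ≥0∞) ω ∂P := by
        apply lintegral_tsum
        intro n
        exact (measurable_const.mul ((measurable_one.indicator (hAmeas n)))).aemeasurable
    _ = ∑' n : ℕ, (n : ℝ≥0∞) ^ p * P {ω | psum (u r) n ω ≤ t} := by
        congr 1; ext n
        rw [lintegral_const_mul _ (measurable_one.indicator (hAmeas n))]
        congr 1
        simpa using lintegral_indicator_one (hAmeas n)
    _ ≤ C := by
        rw [hCdef]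
        exact ENNReal.tsum_le_tsum fun n => mul_le_mul_right (htail r n) _
end Stmt13
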